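/- A riffle of two finite lists A and B is a list of length |A|+|B| which contains A and B as complementary sublists (preserving their orders). The lists S_n = ((1,3) repeated n-1 times, (1,2), (2,1), (3,1) repeated n-1 times) admit a compatible riffle of S_n with itself, namely R = ((1,3) repeated 2n-2 times, (1,2), (1,2), (2,1), (2,1), (3,1) repeated 2n-2 times), where a riffle of lists of ordered pairs is compatible if whenever (b,b') is the opposite successor of an element (a,a') coming from the first list then a ≤ b and a' ≥ b', and whenever (a,a') is the opposite successor of an element (b,b') coming from the second list then a ≥ b and a' ≤ b'. -/

import Mathlib

open List

private def dup2 (L : List (ℕ × ℕ)) : List (Bool × (ℕ × ℕ)) :=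
  L.flatMap fun x => [(false, x), (true, x)]

private lemma dup2_length (L : List (ℕ × ℕ)) : (dup2 L).length = 2 * L.length := by
  induction L with
  | nil => rfl
  | cons a L ih => simp [dup2, List.length_flatMap] at ih ⊢; omega

private lemma dup2_getElem? (L : List (ℕ × ℕ)) (m : ℕ) :
    (dup2 L)[m]? = (L[m / 2]?).map fun x => (decide (m % 2 = 1), x) := by
  induction L generalizing m with
  | nil => simp [dup2]
  | cons a L ih =>
    match m with
    | 0 => simp [dup2]
    | 1 => simp [dup2]
    | (m + 2) =>
      have h2 : (m + 2) / 2 = m / 2 + 1 := by omega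
      have h3 : (m + 2) % 2 = m % 2 := by omega
      simp only [dup2, List.flatMap_cons] at ih ⊢
      simp [h2, h3, ih m]

private lemma dup2_filter_true (L : List (ℕ × ℕ)) :
    ((dup2 L).filterMap fun p => if p.1 then some p.2 else none) = L := by
  induction L with
  | nil => rfl
  | cons a L ih => simpa [dup2] using ih

private lemma dup2_filter_false (L : List (ℕ × ℕ)) :
    ((dup2 L).filterMap fun p => if p.1 then none else some p.2) = L := by
  induction L with
  | nil => rfl
  | cons a L ih => simpa [dup2] using ih

private lemma dup2_map_snd (L : List (ℕ × ℕ)) :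
    (dup2 L).map Prod.snd = L.flatMap fun x => [x, x] := by
  induction L with
  | nil => rfl
  | cons a L ih => simpa [dup2] using ih

private lemma replicate_bind_dup (m : ℕ) (a : ℕ × ℕ) :
    (List.replicate m a).flatMap (fun x => [x, x]) = List.replicate (2 * m) a := by
  induction m with
  | zero => rfl
  | succ m ih =>
    have : 2 * (m + 1) = 2 * m + 1 + 1 := by omega
    simp [List.replicate_succ, this, ih]

theorem stmt4 (n : ℕ) (hn : 1 ≤ n) :
    ∃ R : List (Bool × (ℕ × ℕ)),
      R.map Prod.snd =
        List.replicate (2 * n - 2) (1, 3) ++ [(1, 2), (1, 2), (2, 1), (2, 1)] ++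
          List.replicate (2 * n - 2) (3, 1) ∧
      (R.filterMap fun p => if p.1 then some p.2 else none) =
        List.replicate (n - 1) (1, 3) ++ [(1, 2), (2, 1)] ++ List.replicate (n - 1) (3, 1) ∧
      (R.filterMap fun p => if p.1 then none else some p.2) =
        List.replicate (n - 1) (1, 3) ++ [(1, 2), (2, 1)] ++ List.replicate (n - 1) (3, 1) ∧
      (∀ i j, i < j → j < R.length →
        (R.getD i default).1 ≠ (R.getD j default).1 →
        (∀ l, i < l → l < j → (R.getD l default).1 = (R.getD i default).1) →
        ((R.getD i default).1 = true →
          (R.getD i default).2.1 ≤ (R.getD j default).2.1 ∧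
            (R.getD j default).2.2 ≤ (R.getD i default).2.2) ∧
        ((R.getD i default).1 = false →
          (R.getD j default).2.1 ≤ (R.getD i default).2.1 ∧
            (R.getD i default).2.2 ≤ (R.getD j default).2.2)) := by
  set S : List (ℕ × ℕ) :=
    List.replicate (n - 1) (1, 3) ++ [(1, 2), (2, 1)] ++ List.replicate (n - 1) (3, 1) with hS
  refine ⟨dup2 S, ?_, dup2_filter_true S, dup2_filter_false S, ?_⟩
  · rw [dup2_map_snd, hS]
    simp only [List.flatMap_append, List.flatMap_cons, List.flatMap_nil, replicate_bind_dup]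
    have h2 : 2 * (n - 1) = 2 * n - 2 := by omega
    rw [h2]
    rfl
  · -- compatibility
    have hchain : List.Chain' (fun a b : ℕ × ℕ => a.1 ≤ b.1 ∧ b.2 ≤ a.2) S := by
      rw [hS, List.append_assoc]
      refine List.isChain_append.2 ⟨List.isChain_replicate_of_rel _ ⟨le_refl _, le_refl _⟩, ?_, ?_⟩
      · refine List.isChain_append.2 ⟨?_, List.isChain_replicate_of_rel _ ⟨le_refl _, le_refl _⟩, ?_⟩
        · exact List.isChain_cons_cons.2 ⟨⟨by norm_num, by norm_num⟩, List.isChain_singleton _⟩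
        · intro x hx y hy
          cases n with
          | zero => omega
          | succ k =>
            cases k with
            | zero => simp at hy
            | succ k =>
              simp [List.head?_replicate] at hx hy
              subst hx; subst hy; exact ⟨by norm_num, by norm_num⟩
      · intro x hx y hy
        cases n with
        | zero => omega
        | succ k =>
          cases k with
          | zero => simp at hx
          | succ k =>
            simp [List.getLast?_replicate] at hx hy
            subst hx; subst hy; exact ⟨by norm_num, by norm_num⟩
    have hSlen : 0 < S.length := by
      rw [hS]; simp
    have hRlen : (dup2 S).length = 2 * S.length := dup2_length S
    have hget : ∀ m, m < 2 * S.length →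
        (dup2 S).getD m default = (decide (m % 2 = 1), S.getD (m / 2) default) := by
      intro m hm
      have hm2 : m / 2 < S.length := by omega
      rw [List.getD_eq_getElem?_getD, dup2_getElem? S m,
        List.getD_eq_getElem?_getD (l := S)]
      rw [(List.getElem?_eq_some_iff (l := S)).2 ⟨hm2, rfl⟩]
      rfl
    intro i j hij hjR htag hbetween
    have hiR : i < 2 * S.length := by omega
    have hjR' : j < 2 * S.length := by rw [hRlen] at hjR; exact hjR
    have hj : j = i + 1 := by
      by_contra h
      have hl : i < i + 1 := by omega
      have hl2 : i + 1 < j := by omega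
      have := hbetween (i + 1) hl hl2
      rw [hget i hiR, hget (i + 1) (by omega)] at this
      simp at this
      omega
    subst hj
    rw [hget i hiR, hget (i + 1) hjR']
    rcases Nat.even_or_odd i with ⟨k, hk⟩ | ⟨k, hk⟩
    · -- i even: values equal
      have h1 : i % 2 = 0 := by omega
      have h2 : (i + 1) % 2 = 1 := by omega
      have h3 : (i + 1) / 2 = i / 2 := by omega
      simp only [h1, h2, h3]
      exact ⟨fun h => by simp at h, fun _ => ⟨le_refl _, le_refl _⟩⟩
    · -- i odd
      have h1 : i % 2 = 1 := by omega
      have h2 : (i + 1) % 2 = 0 := by omega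
      have h3 : (i + 1) / 2 = i / 2 + 1 := by omega
      have hlt : i / 2 + 1 < S.length := by omega
      have := List.isChain_iff_getElem.1 hchain (i / 2) (by omega)
      rw [← List.getD_eq_getElem (l := S) (d := default) (n := i / 2) (by omega), ← List.getD_eq_getElem (l := S) (d := default) (n := i / 2 + 1) (by omega)] at this
      simp only [h1, h2, h3]
      exact ⟨fun _ => this, fun h => by simp at h⟩
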